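/- arXiv:1602.07886 — 4 statements merged into one kernel-verified Lean document; each statement's English description precedes it below -/
import Mathlib

section
/- Let q ∈ (0,1), p > 2, A, B, C, λ > 0 be real numbers, and suppose λC < m(t_max), where m(t) = A t^{1+q} − B t^{p−1+q} and t_max = ((1+q)A/((p−1+q)B))^{1/(p−2)}. Define φ : (0,∞) → ℝ by φ(t) = (A/2)t² − (λC/(1−q)) t^{1−q} − (B/p) t^{p}. Then φ has exactly two critical points t₁ < t₂ in (0,∞); they satisfy t₁ < t_max < t₂, φ″(t₁) > 0 and φ″(t₂) < 0, and φ is strictly decreasing on (0,t₁), strictly increasing on (t₁,t₂), and strictly decreasing on (t₂,∞). -/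
open Real Set

/-- For `0 < q < 1`, `p > 2`, `A, B, C, λ > 0` with `λ C < m t_max`, where
`m t = A t^(1+q) - B t^(p-1+q)` and `t_max = ((1+q)A/((p-1+q)B))^(1/(p-2))`, the
fibering map `φ t = (A/2) t² - (λC/(1-q)) t^(1-q) - (B/p) t^p` has exactly two
critical points `t₁ < t_max < t₂` in `(0, ∞)`, with `φ'' t₁ > 0`, `φ'' t₂ < 0`,
and `φ` is strictly decreasing on `(0,t₁)`, strictly increasing on `(t₁,t₂)` and
strictly decreasing on `(t₂,∞)`. -/
theorem stmt_2 (q p A B C lam : ℝ) (hq0 : 0 < q) (hq1 : q < 1) (hp : 2 < p)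
    (hA : 0 < A) (hB : 0 < B) (hC : 0 < C) (hlam : 0 < lam)
    (m : ℝ → ℝ) (hm : ∀ t : ℝ, m t = A * t ^ (1 + q) - B * t ^ (p - 1 + q))
    (tmax : ℝ) (htmax : tmax = ((1 + q) * A / ((p - 1 + q) * B)) ^ (1 / (p - 2)))
    (hsmall : lam * C < m tmax)
    (φ : ℝ → ℝ)
    (hφ : ∀ t : ℝ, φ t = A / 2 * t ^ 2 - lam * C / (1 - q) * t ^ (1 - q) - B / p * t ^ p) :
    ∃ t₁ t₂ : ℝ, 0 < t₁ ∧ t₁ < tmax ∧ tmax < t₂ ∧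
      deriv φ t₁ = 0 ∧ deriv φ t₂ = 0 ∧
      (∀ t : ℝ, 0 < t → deriv φ t = 0 → t = t₁ ∨ t = t₂) ∧
      0 < deriv (deriv φ) t₁ ∧ deriv (deriv φ) t₂ < 0 ∧
      StrictAntiOn φ (Set.Ioo 0 t₁) ∧ StrictMonoOn φ (Set.Ioo t₁ t₂) ∧
      StrictAntiOn φ (Set.Ioi t₂) := by
  have hp2 : (0:ℝ) < p - 2 := by linarith
  have hK : (0:ℝ) < p - 1 + q := by linarith
  have h1q : (0:ℝ) < 1 + q := by linarith
  have hbase : (0:ℝ) < (1 + q) * A / ((p - 1 + q) * B) := by positivity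
  have htm0 : 0 < tmax := htmax ▸ Real.rpow_pos_of_pos hbase _
  have htmpow : tmax ^ (p - 2) = (1 + q) * A / ((p - 1 + q) * B) := by
    rw [htmax, ← Real.rpow_mul hbase.le, one_div, inv_mul_cancel₀ hp2.ne', Real.rpow_one]
  have hgkey : (p - 1 + q) * B * tmax ^ (p - 2) = (1 + q) * A := by
    rw [htmpow]; field_simp
  have hgpos : ∀ t : ℝ, 0 ≤ t → t < tmax → 0 < (1 + q) * A - (p - 1 + q) * B * t ^ (p - 2) := by
    intro t ht0 htlt
    have h1 := Real.rpow_lt_rpow ht0 htlt hp2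
    nlinarith [mul_lt_mul_of_pos_left h1 (mul_pos hK hB)]
  have hgneg : ∀ t : ℝ, tmax < t → (1 + q) * A - (p - 1 + q) * B * t ^ (p - 2) < 0 := by
    intro t htlt
    have h1 := Real.rpow_lt_rpow htm0.le htlt hp2
    nlinarith [mul_lt_mul_of_pos_left h1 (mul_pos hK hB)]
  have hcrpow : ∀ c : ℝ, 0 ≤ c → Continuous fun t : ℝ => t ^ c := fun c hc =>
    continuous_iff_continuousAt.2 fun x => Real.continuousAt_rpow_const x c (Or.inr hc)
  have hmc : Continuous m := by
    have h1 : Continuous fun t : ℝ => A * t ^ (1 + q) - B * t ^ (p - 1 + q) :=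
      (continuous_const.mul (hcrpow _ h1q.le)).sub (continuous_const.mul (hcrpow _ hK.le))
    exact h1.congr fun t => (hm t).symm
  have hm0 : m 0 = 0 := by
    rw [hm, Real.zero_rpow h1q.ne', Real.zero_rpow hK.ne']; ring
  have hm' : ∀ t : ℝ, 0 < t →
      HasDerivAt m (t ^ q * ((1 + q) * A - (p - 1 + q) * B * t ^ (p - 2))) t := by
    intro t ht
    have d1 := (Real.hasDerivAt_rpow_const (p := 1 + q) (Or.inl ht.ne')).const_mul A
    have d2 := (Real.hasDerivAt_rpow_const (p := p - 1 + q) (Or.inl ht.ne')).const_mul B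
    have h := d1.sub d2
    rw [show (1 + q - 1 : ℝ) = q by ring, show (p - 1 + q - 1 : ℝ) = p - 2 + q by ring] at h
    have hfun : m = fun t : ℝ => A * t ^ (1 + q) - B * t ^ (p - 1 + q) := funext hm
    rw [hfun]
    convert h using 1
    all_goals try rfl
    have e : t ^ (p - 2 + q) = t ^ q * t ^ (p - 2) := by
      rw [← Real.rpow_add ht, show (q + (p - 2) : ℝ) = p - 2 + q by ring]
    rw [e]; ring
  have hmono : StrictMonoOn m (Icc 0 tmax) := by
    apply strictMonoOn_of_deriv_pos (convex_Icc _ _) hmc.continuousOn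
    intro t ht
    rw [interior_Icc] at ht
    rw [(hm' t ht.1).deriv]
    exact mul_pos (Real.rpow_pos_of_pos ht.1 q) (hgpos t ht.1.le ht.2)
  have hanti : StrictAntiOn m (Ici tmax) := by
    apply strictAntiOn_of_deriv_neg (convex_Ici _) hmc.continuousOn
    intro t ht
    rw [interior_Ici] at ht
    have ht0 : 0 < t := htm0.trans ht
    rw [(hm' t ht0).deriv]
    exact mul_neg_of_pos_of_neg (Real.rpow_pos_of_pos ht0 q) (hgneg t ht)
  have hlc : 0 < lam * C := mul_pos hlam hC
  -- existence of t₁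
  obtain ⟨t₁, ht₁mem, ht₁⟩ : ∃ t ∈ Icc (0:ℝ) tmax, m t = lam * C := by
    have h := intermediate_value_Icc htm0.le hmc.continuousOn
      (show lam * C ∈ Icc (m 0) (m tmax) from ⟨by rw [hm0]; exact hlc.le, hsmall.le⟩)
    obtain ⟨t, htmem, ht⟩ := h
    exact ⟨t, htmem, ht⟩
  have ht₁0 : 0 < t₁ := by
    rcases lt_or_eq_of_le ht₁mem.1 with h | h
    · exact h
    · exfalso; rw [← h, hm0] at ht₁; linarith
  have ht₁lt : t₁ < tmax := by
    rcases lt_or_eq_of_le ht₁mem.2 with h | h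
    · exact h
    · exfalso; rw [h] at ht₁; linarith
  -- existence of t₂
  set Tv := max tmax ((2 * A / B) ^ ((1:ℝ) / (p - 2))) with hTv
  have hT0 : 0 < Tv := lt_of_lt_of_le htm0 (le_max_left _ _)
  have hTpow : 2 * A / B ≤ Tv ^ (p - 2) := by
    have h2 : (0:ℝ) ≤ (2 * A / B) ^ ((1:ℝ) / (p - 2)) := Real.rpow_nonneg (by positivity) _
    have h4 : ((2 * A / B) ^ ((1:ℝ) / (p - 2))) ^ (p - 2) = 2 * A / B := by
      rw [← Real.rpow_mul (by positivity : (0:ℝ) ≤ 2 * A / B), one_div,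
        inv_mul_cancel₀ hp2.ne', Real.rpow_one]
    calc 2 * A / B = ((2 * A / B) ^ ((1:ℝ) / (p - 2))) ^ (p - 2) := h4.symm
      _ ≤ Tv ^ (p - 2) := Real.rpow_le_rpow h2 (le_max_right _ _) hp2.le
  have hmT : m Tv < 0 := by
    rw [hm]
    have e : Tv ^ (p - 1 + q) = Tv ^ (1 + q) * Tv ^ (p - 2) := by
      rw [← Real.rpow_add hT0, show ((1 + q) + (p - 2) : ℝ) = p - 1 + q by ring]
    rw [e]
    have h1 : 0 < Tv ^ (1 + q) := Real.rpow_pos_of_pos hT0 _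
    have h2 : 2 * A ≤ Tv ^ (p - 2) * B := by
      rw [div_le_iff₀ hB] at hTpow; linarith
    nlinarith [mul_le_mul_of_nonneg_left h2 h1.le, mul_pos hA h1]
  obtain ⟨t₂, ht₂mem, ht₂⟩ : ∃ t ∈ Icc tmax Tv, m t = lam * C := by
    have h := intermediate_value_Icc' (le_max_left _ _ : tmax ≤ Tv) hmc.continuousOn
      (show lam * C ∈ Icc (m Tv) (m tmax) from ⟨by linarith, hsmall.le⟩)
    obtain ⟨t, htmem, ht⟩ := h
    exact ⟨t, htmem, ht⟩
  have ht₂gt : tmax < t₂ := by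
    rcases lt_or_eq_of_le ht₂mem.1 with h | h
    · exact h
    · exfalso; rw [← h] at ht₂; linarith
  have ht₂0 : 0 < t₂ := htm0.trans ht₂gt
  -- derivative of φ
  have hDφ : ∀ t : ℝ, 0 < t →
      HasDerivAt φ (A * t - lam * C * t ^ (-q) - B * t ^ (p - 1)) t := by
    intro t ht
    have hφf : φ = fun t : ℝ => A / 2 * t ^ 2 - lam * C / (1 - q) * t ^ (1 - q) - B / p * t ^ p :=
      funext hφ
    rw [hφf]
    have d0 := (hasDerivAt_pow 2 t).const_mul (A / 2)
    have d1 := (Real.hasDerivAt_rpow_const (p := 1 - q) (Or.inl ht.ne')).const_mul (lam * C / (1 - q))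
    have d2 := (Real.hasDerivAt_rpow_const (p := p) (Or.inl ht.ne')).const_mul (B / p)
    have h := (d0.sub d1).sub d2
    convert h using 1
    all_goals try rfl
    rw [show (1 - q - 1 : ℝ) = -q by ring]
    have hq' : (1 - q : ℝ) ≠ 0 := by linarith
    have hp' : (p : ℝ) ≠ 0 := by linarith
    field_simp
    ring
  have hderiv : ∀ t : ℝ, 0 < t →
      deriv φ t = t ^ (-q) * (m t - lam * C) := by
    intro t ht
    rw [(hDφ t ht).deriv, hm]
    have e1 : t ^ (-q) * t ^ (1 + q) = t := by
      rw [← Real.rpow_add ht, show (-q + (1 + q) : ℝ) = 1 by ring, Real.rpow_one]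
    have e2 : t ^ (-q) * t ^ (p - 1 + q) = t ^ (p - 1) := by
      rw [← Real.rpow_add ht, show (-q + (p - 1 + q) : ℝ) = p - 1 by ring]
    have expand : t ^ (-q) * (A * t ^ (1 + q) - B * t ^ (p - 1 + q) - lam * C)
        = A * (t ^ (-q) * t ^ (1 + q)) - B * (t ^ (-q) * t ^ (p - 1 + q)) - lam * C * t ^ (-q) := by
      ring
    rw [expand, e1, e2]
    ring
  have hd₁ : deriv φ t₁ = 0 := by rw [hderiv t₁ ht₁0, ht₁]; ring
  have hd₂ : deriv φ t₂ = 0 := by rw [hderiv t₂ ht₂0, ht₂]; ring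
  -- second derivative
  have hDψ2 : ∀ t : ℝ, 0 < t →
      HasDerivAt (fun s : ℝ => A * s - lam * C * s ^ (-q) - B * s ^ (p - 1))
        (A + q * lam * C * t ^ (-q - 1) - (p - 1) * B * t ^ (p - 2)) t := by
    intro t ht
    have d0 : HasDerivAt (fun s : ℝ => A * s) A t := by
      simpa using (hasDerivAt_id t).const_mul A
    have d1 := (Real.hasDerivAt_rpow_const (p := -q) (Or.inl ht.ne')).const_mul (lam * C)
    have d2 := (Real.hasDerivAt_rpow_const (p := p - 1) (Or.inl ht.ne')).const_mul B
    have h := (d0.sub d1).sub d2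
    rw [show (p - 1 - 1 : ℝ) = p - 2 by ring] at h
    convert h using 1
    all_goals try rfl
    ring
  have hsecond : ∀ t : ℝ, 0 < t → m t = lam * C →
      deriv (deriv φ) t = (1 + q) * A - (p - 1 + q) * B * t ^ (p - 2) := by
    intro t ht hmt
    have hev : deriv φ =ᶠ[nhds t] fun s : ℝ => A * s - lam * C * s ^ (-q) - B * s ^ (p - 1) :=
      Filter.eventually_of_mem (isOpen_Ioi.mem_nhds ht) fun x hx => (hDφ x hx).deriv
    rw [Filter.EventuallyEq.deriv_eq hev, (hDψ2 t ht).deriv]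
    have hmt' : A * t ^ (1 + q) - B * t ^ (p - 1 + q) = lam * C := (hm t).symm.trans hmt
    have e1 : t ^ (1 + q) * t ^ (-q - 1) = 1 := by
      rw [← Real.rpow_add ht, show ((1 + q) + (-q - 1) : ℝ) = 0 by ring, Real.rpow_zero]
    have e2 : t ^ (p - 1 + q) * t ^ (-q - 1) = t ^ (p - 2) := by
      rw [← Real.rpow_add ht, show ((p - 1 + q) + (-q - 1) : ℝ) = p - 2 by ring]
    linear_combination (-(q) * t ^ (-q - 1)) * hmt' + q * A * e1 - q * B * e2
  have hsec₁ : 0 < deriv (deriv φ) t₁ := by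
    rw [hsecond t₁ ht₁0 ht₁]; exact hgpos t₁ ht₁0.le ht₁lt
  have hsec₂ : deriv (deriv φ) t₂ < 0 := by
    rw [hsecond t₂ ht₂0 ht₂]; exact hgneg t₂ ht₂gt
  -- uniqueness
  have huniq : ∀ t : ℝ, 0 < t → deriv φ t = 0 → t = t₁ ∨ t = t₂ := by
    intro t ht hdt
    rw [hderiv t ht] at hdt
    have hmt : m t = lam * C := by
      have h0 : t ^ (-q) ≠ 0 := ne_of_gt (Real.rpow_pos_of_pos ht _)
      have := (mul_eq_zero.mp hdt).resolve_left h0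
      linarith
    by_cases hcase : t ≤ tmax
    · left
      exact hmono.injOn ⟨ht.le, hcase⟩ ⟨ht₁0.le, ht₁lt.le⟩ (by rw [hmt, ht₁])
    · right
      push_neg at hcase
      exact hanti.injOn (hcase.le : t ∈ Ici tmax) (ht₂gt.le : t₂ ∈ Ici tmax) (by rw [hmt, ht₂])
  -- continuity of φ
  have hφc : Continuous φ := by
    have h1 : Continuous fun t : ℝ =>
        A / 2 * t ^ 2 - lam * C / (1 - q) * t ^ (1 - q) - B / p * t ^ p :=
      ((continuous_const.mul (continuous_pow 2)).sub
        (continuous_const.mul (hcrpow _ (by linarith)))).sub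
        (continuous_const.mul (hcrpow _ (by linarith)))
    exact h1.congr fun t => (hφ t).symm
  -- sign of deriv φ
  have hsign1 : ∀ t ∈ Ioo (0:ℝ) t₁, deriv φ t < 0 := by
    intro t ht
    rw [hderiv t ht.1]
    have hlt : m t < lam * C := by
      have := hmono ⟨ht.1.le, by linarith [ht.2, ht₁lt]⟩ ⟨ht₁0.le, ht₁lt.le⟩ ht.2
      linarith [ht₁ ▸ this]
    exact mul_neg_of_pos_of_neg (Real.rpow_pos_of_pos ht.1 _) (by linarith)
  have hsign2 : ∀ t ∈ Ioo t₁ t₂, 0 < deriv φ t := by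
    intro t ht
    have ht0 : 0 < t := ht₁0.trans ht.1
    rw [hderiv t ht0]
    have hgt : lam * C < m t := by
      by_cases hcase : t ≤ tmax
      · have := hmono ⟨ht₁0.le, ht₁lt.le⟩ ⟨ht0.le, hcase⟩ ht.1
        linarith [ht₁ ▸ this]
      · push_neg at hcase
        have := hanti (hcase.le : t ∈ Ici tmax) (ht₂gt.le : t₂ ∈ Ici tmax) ht.2
        linarith [ht₂ ▸ this]
    exact mul_pos (Real.rpow_pos_of_pos ht0 _) (by linarith)
  have hsign3 : ∀ t ∈ Ioi t₂, deriv φ t < 0 := by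
    intro t ht
    have ht0 : 0 < t := ht₂0.trans ht
    rw [hderiv t ht0]
    have hlt : m t < lam * C := by
      have := hanti (ht₂gt.le : t₂ ∈ Ici tmax) ((ht₂gt.trans ht).le : t ∈ Ici tmax) ht
      linarith [ht₂ ▸ this]
    exact mul_neg_of_pos_of_neg (Real.rpow_pos_of_pos ht0 _) (by linarith)
  refine ⟨t₁, t₂, ht₁0, ht₁lt, ht₂gt, hd₁, hd₂, huniq, hsec₁, hsec₂, ?_, ?_, ?_⟩
  · apply strictAntiOn_of_deriv_neg (convex_Ioo _ _) hφc.continuousOn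
    intro t ht
    rw [interior_Ioo] at ht
    exact hsign1 t ht
  · apply strictMonoOn_of_deriv_pos (convex_Ioo _ _) hφc.continuousOn
    intro t ht
    rw [interior_Ioo] at ht
    exact hsign2 t ht
  · apply strictAntiOn_of_deriv_neg (convex_Ioi _) hφc.continuousOn
    intro t ht
    rw [interior_Ioi] at ht
    exact hsign3 t ht
end

section
/- Let p > 2 and A, B, C, λ > 0 be real numbers, and define φ : (0,∞) → ℝ by φ(t) = (A/2)t² − λC ln t − (B/p) t^{p}. Then φ(t) → +∞ as t → 0⁺ and φ(t) → −∞ as t → ∞. Moreover, setting m̃(t) = A t² − B t^{p} and t̃ = (2A/(pB))^{1/(p−2)}, if λC < m̃(t̃) then φ has exactly two critical points t₁ < t₂ in (0,∞), with φ″(t₁) > 0 and φ″(t₂) < 0. -/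
open Real Set Filter Topology

set_option maxHeartbeats 1000000

/-- For `p > 2` and `A, B, C, λ > 0`, the fibering map
`φ t = (A/2) t² - λC ln t - (B/p) t^p` satisfies `φ(t) → +∞` as `t → 0⁺` and
`φ(t) → -∞` as `t → ∞`. Moreover, with `m̃ t = A t² - B t^p` and
`t̃ = (2A/(pB))^(1/(p-2))`, if `λC < m̃ t̃` then `φ` has exactly two critical
points `t₁ < t₂` in `(0, ∞)`, with `φ'' t₁ > 0` and `φ'' t₂ < 0`. -/
theorem stmt_3 (p A B C lam : ℝ) (hp : 2 < p)
    (hA : 0 < A) (hB : 0 < B) (hC : 0 < C) (hlam : 0 < lam)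
    (φ : ℝ → ℝ)
    (hφ : ∀ t : ℝ, φ t = A / 2 * t ^ 2 - lam * C * Real.log t - B / p * t ^ p)
    (mt : ℝ → ℝ) (hmt : ∀ t : ℝ, mt t = A * t ^ 2 - B * t ^ p)
    (tt : ℝ) (htt : tt = (2 * A / (p * B)) ^ (1 / (p - 2))) :
    Filter.Tendsto φ (nhdsWithin 0 (Set.Ioi 0)) Filter.atTop ∧
    Filter.Tendsto φ Filter.atTop Filter.atBot ∧
    (lam * C < mt tt →
      ∃ t₁ t₂ : ℝ, 0 < t₁ ∧ t₁ < t₂ ∧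
        deriv φ t₁ = 0 ∧ deriv φ t₂ = 0 ∧
        (∀ t : ℝ, 0 < t → deriv φ t = 0 → t = t₁ ∨ t = t₂) ∧
        0 < deriv (deriv φ) t₁ ∧ deriv (deriv φ) t₂ < 0) := by
  have hp0 : (0:ℝ) < p := by linarith
  have hp2 : (0:ℝ) < p - 2 := by linarith
  have hfrac : (0:ℝ) < 2 * A / (p * B) := by positivity
  have htt0 : 0 < tt := by rw [htt]; positivity
  have http : tt ^ (p - 2) = 2 * A / (p * B) := by
    rw [htt, ← Real.rpow_mul hfrac.le, one_div,
      inv_mul_cancel₀ (by linarith : p - 2 ≠ 0), Real.rpow_one]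
  -- continuity of mt
  have hrpc : Continuous fun t : ℝ => t ^ p :=
    continuous_iff_continuousAt.2 fun x => Real.continuousAt_rpow_const x p (Or.inr hp0.le)
  have hmtc : Continuous mt := by
    have : Continuous fun t : ℝ => A * t ^ 2 - B * t ^ p := by
      exact (continuous_const.mul (continuous_pow 2)).sub (continuous_const.mul hrpc)
    exact this.congr fun t => (hmt t).symm
  -- splitting of powers
  have hsplit2 : ∀ t : ℝ, 0 < t → t ^ p * t ^ (2 - p) = t ^ 2 := by
    intro t ht
    rw [← Real.rpow_add ht, show p + (2 - p) = ((2:ℕ):ℝ) by push_cast; ring,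
      Real.rpow_natCast]
  -- mt tendsto atBot
  have hmt_bot : Tendsto mt atTop atBot := by
    have hin : Tendsto (fun t : ℝ => A * t ^ (2 - p) - B) atTop (𝓝 (-B)) := by
      have h0 : Tendsto (fun t : ℝ => t ^ (2 - p)) atTop (𝓝 0) := by
        have := tendsto_rpow_neg_atTop hp2
        simpa [show -(p-2) = 2 - p by ring] using this
      have := (h0.const_mul A).sub_const B
      simpa using this
    have h1 : Tendsto (fun t : ℝ => t ^ p * (A * t ^ (2 - p) - B)) atTop atBot :=
      Filter.Tendsto.atTop_mul_neg (by linarith : -B < 0) (tendsto_rpow_atTop hp0) hin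
    refine h1.congr' ?_
    filter_upwards [eventually_gt_atTop (0:ℝ)] with t ht
    have h2 := hsplit2 t ht
    rw [hmt]; nlinarith [h2]
  -- φ tendsto atBot at atTop
  have hφ_bot : Tendsto φ atTop atBot := by
    have hin : Tendsto (fun t : ℝ => A / 2 * t ^ (2 - p) - B / p) atTop (𝓝 (-(B/p))) := by
      have h0 : Tendsto (fun t : ℝ => t ^ (2 - p)) atTop (𝓝 0) := by
        have := tendsto_rpow_neg_atTop hp2
        simpa [show -(p-2) = 2 - p by ring] using this
      have := (h0.const_mul (A/2)).sub_const (B/p)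
      simpa using this
    have hBp : (0:ℝ) < B / p := by positivity
    have h1 : Tendsto (fun t : ℝ => t ^ p * (A / 2 * t ^ (2 - p) - B / p)) atTop atBot :=
      Filter.Tendsto.atTop_mul_neg (by linarith : -(B/p) < 0) (tendsto_rpow_atTop hp0) hin
    have h2 : Tendsto (fun t : ℝ => t ^ p * (A / 2 * t ^ (2 - p) - B / p)
        + (-(lam * C * Real.log t))) atTop atBot := by
      refine tendsto_atBot_mono' atTop ?_ h1
      filter_upwards [eventually_ge_atTop (1:ℝ)] with t ht
      have : 0 ≤ Real.log t := Real.log_nonneg ht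
      nlinarith [mul_nonneg (mul_nonneg hlam.le hC.le) this]
    refine h2.congr' ?_
    filter_upwards [eventually_gt_atTop (0:ℝ)] with t ht
    have h3 := hsplit2 t ht
    rw [hφ]; nlinarith [h3]
  -- φ tendsto atTop at 0⁺
  have hφ_top : Tendsto φ (nhdsWithin 0 (Set.Ioi 0)) atTop := by
    have h1 : Tendsto (fun t : ℝ => -(lam * C) * Real.log t)
        (nhdsWithin 0 (Set.Ioi 0)) atTop :=
      Filter.Tendsto.const_mul_atBot_of_neg (by nlinarith : -(lam*C) < 0)
        Real.tendsto_log_nhdsGT_zero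
    have h2 : Tendsto (fun t : ℝ => A / 2 * t ^ 2 - B / p * t ^ p)
        (nhdsWithin 0 (Set.Ioi 0)) (𝓝 0) := by
      have hc : Continuous fun t : ℝ => A / 2 * t ^ 2 - B / p * t ^ p :=
        (continuous_const.mul (continuous_pow 2)).sub (continuous_const.mul hrpc)
      have := (hc.tendsto 0).mono_left (nhdsWithin_le_nhds (s := Set.Ioi (0:ℝ)))
      simpa [Real.zero_rpow hp0.ne'] using this
    have := h1.atTop_add h2
    refine this.congr fun t => ?_
    rw [hφ]; ring
  refine ⟨hφ_top, hφ_bot, ?_⟩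
  intro hlt
  -- derivative of φ
  have key : ∀ t : ℝ, 0 < t → HasDerivAt φ ((mt t - lam * C) / t) t := by
    intro t ht
    have h1 : HasDerivAt (fun x : ℝ => A / 2 * x ^ 2) (A / 2 * (2 * t ^ 1)) t :=
      (hasDerivAt_pow 2 t).const_mul _
    have h2 : HasDerivAt (fun x : ℝ => lam * C * Real.log x) (lam * C * t⁻¹) t :=
      (Real.hasDerivAt_log ht.ne').const_mul _
    have h3 : HasDerivAt (fun x : ℝ => B / p * x ^ p) (B / p * (p * t ^ (p - 1))) t :=
      (Real.hasDerivAt_rpow_const (Or.inl ht.ne')).const_mul _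
    have h4 : HasDerivAt (fun x : ℝ => A / 2 * x ^ 2 - lam * C * Real.log x - B / p * x ^ p) _ t :=
      (h1.sub h2).sub h3
    have hfun : (fun x : ℝ => A / 2 * x ^ 2 - lam * C * Real.log x - B / p * x ^ p) = φ :=
      funext fun x => (hφ x).symm
    rw [hfun] at h4
    convert h4 using 1
    have hpow : t ^ (p - 1) = t ^ p / t := by
      rw [Real.rpow_sub ht, Real.rpow_one]
    rw [hmt, hpow]
    field_simp
    ring
  have hderiv : ∀ t : ℝ, 0 < t → deriv φ t = (mt t - lam * C) / t :=
    fun t ht => (key t ht).deriv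
  -- derivative of mt, monotonicity
  have keym : ∀ t : ℝ, 0 < t → HasDerivAt mt (2 * A * t - p * B * t ^ (p - 1)) t := by
    intro t ht
    have h1 : HasDerivAt (fun x : ℝ => A * x ^ 2) (A * (2 * t ^ 1)) t :=
      (hasDerivAt_pow 2 t).const_mul _
    have h2 : HasDerivAt (fun x : ℝ => B * x ^ p) (B * (p * t ^ (p - 1))) t :=
      (Real.hasDerivAt_rpow_const (Or.inl ht.ne')).const_mul _
    have h3 : HasDerivAt (fun x : ℝ => A * x ^ 2 - B * x ^ p) _ t := h1.sub h2
    have hfun : (fun x : ℝ => A * x ^ 2 - B * x ^ p) = mt :=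
      funext fun x => (hmt x).symm
    rw [hfun] at h3
    convert h3 using 1
    ring
  have hsplit1 : ∀ t : ℝ, 0 < t → t ^ (p - 1) = t ^ (p - 2) * t := by
    intro t ht
    rw [show p - 1 = (p - 2) + 1 by ring, Real.rpow_add ht, Real.rpow_one]
  have hPB : p * B * (2 * A / (p * B)) = 2 * A := by field_simp
  have hmono : StrictMonoOn mt (Icc 0 tt) := by
    apply strictMonoOn_of_deriv_pos (convex_Icc 0 tt) hmtc.continuousOn
    intro x hx
    rw [interior_Icc] at hx
    obtain ⟨hx0, hxt⟩ := hx
    rw [(keym x hx0).deriv]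
    have h1 : x ^ (p - 2) < tt ^ (p - 2) := Real.rpow_lt_rpow hx0.le hxt hp2
    rw [http] at h1
    have h2 : p * B * x ^ (p - 2) < 2 * A := by
      calc p * B * x ^ (p - 2) < p * B * (2 * A / (p * B)) := by
            apply mul_lt_mul_of_pos_left h1 (by positivity)
        _ = 2 * A := hPB
    rw [hsplit1 x hx0]
    nlinarith
  have hanti : StrictAntiOn mt (Ici tt) := by
    apply strictAntiOn_of_deriv_neg (convex_Ici tt) hmtc.continuousOn
    intro x hx
    rw [interior_Ici] at hx
    have hx0 : 0 < x := lt_trans htt0 hx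
    rw [(keym x hx0).deriv]
    have h1 : tt ^ (p - 2) < x ^ (p - 2) := Real.rpow_lt_rpow htt0.le hx hp2
    rw [http] at h1
    have h2 : 2 * A < p * B * x ^ (p - 2) := by
      calc 2 * A = p * B * (2 * A / (p * B)) := hPB.symm
        _ < p * B * x ^ (p - 2) := by
            apply mul_lt_mul_of_pos_left h1 (by positivity)
    rw [hsplit1 x hx0]
    nlinarith
  -- existence of t₁
  set s : ℝ := min tt (Real.sqrt (lam * C / A)) / 2 with hs_def
  have hsq : 0 < Real.sqrt (lam * C / A) := Real.sqrt_pos.2 (by positivity)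
  have hs0 : 0 < s := by
    apply div_pos (lt_min htt0 hsq) two_pos
  have hstt : s < tt := by
    have : s ≤ tt / 2 := by
      apply div_le_div_of_nonneg_right (min_le_left _ _) (by norm_num : (0:ℝ) ≤ 2)
    linarith
  have hs_small : mt s < lam * C := by
    have h1 : s ≤ Real.sqrt (lam * C / A) / 2 := by
      apply div_le_div_of_nonneg_right (min_le_right _ _) (by norm_num : (0:ℝ) ≤ 2)
    have h2 : Real.sqrt (lam * C / A) ^ 2 = lam * C / A :=
      Real.sq_sqrt (by positivity)
    have h3 : s ^ 2 ≤ lam * C / A / 4 := by nlinarith [hs0.le]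
    have h4 : A * s ^ 2 ≤ lam * C / 4 := by
      rw [div_div] at h3
      calc A * s ^ 2 ≤ A * (lam * C / (A * 4)) := by
            apply mul_le_mul_of_nonneg_left h3 hA.le
        _ = lam * C / 4 := by field_simp
    have h5 : 0 < s ^ p := Real.rpow_pos_of_pos hs0 p
    rw [hmt]; nlinarith
  obtain ⟨t₁, ht₁mem, ht₁eq⟩ :=
    intermediate_value_Ioo hstt.le hmtc.continuousOn ⟨hs_small, hlt⟩
  -- existence of t₂
  obtain ⟨T, hT1, hT2⟩ :=
    ((hmt_bot.eventually_lt_atBot (lam * C)).and (eventually_gt_atTop tt)).exists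
  obtain ⟨t₂, ht₂mem, ht₂eq⟩ :=
    intermediate_value_Ioo' hT2.le hmtc.continuousOn ⟨hT1, hlt⟩
  obtain ⟨hst₁, ht₁tt⟩ := ht₁mem
  obtain ⟨htt₂, ht₂T⟩ := ht₂mem
  have ht₁0 : 0 < t₁ := lt_trans hs0 hst₁
  have ht₂0 : 0 < t₂ := lt_trans htt0 htt₂
  have ht₁₂ : t₁ < t₂ := lt_trans ht₁tt htt₂
  -- second derivative formula
  have key2 : ∀ t : ℝ, 0 < t → mt t = lam * C →
      deriv (deriv φ) t = 2 * A - p * B * t ^ (p - 2) := by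
    intro t ht hcrit
    have hEE : deriv φ =ᶠ[𝓝 t]
        fun x => A * x - lam * C * x⁻¹ - B * x ^ (p - 1) := by
      filter_upwards [Ioi_mem_nhds ht] with x hx
      have hx' : (0:ℝ) < x := hx
      rw [hderiv x hx', hmt]
      have hpow : x ^ (p - 1) = x ^ p / x := by
        rw [Real.rpow_sub hx', Real.rpow_one]
      rw [hpow]
      field_simp [hx'.ne']
      ring
    have h1 : HasDerivAt (fun x : ℝ => A * x) (A * 1) t :=
      (hasDerivAt_id t).const_mul _
    have h2 : HasDerivAt (fun x : ℝ => lam * C * x⁻¹) (lam * C * (-(t ^ 2)⁻¹)) t :=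
      (hasDerivAt_inv ht.ne').const_mul _
    have h3 : HasDerivAt (fun x : ℝ => B * x ^ (p - 1)) (B * ((p - 1) * t ^ (p - 1 - 1))) t :=
      (Real.hasDerivAt_rpow_const (Or.inl ht.ne')).const_mul _
    have h4 : HasDerivAt (fun x : ℝ => A * x - lam * C * x⁻¹ - B * x ^ (p - 1)) _ t :=
      (h1.sub h2).sub h3
    rw [hEE.deriv_eq, h4.deriv]
    have hsp : t ^ p = t ^ (p - 2) * t ^ 2 := by
      rw [show p = (p - 2) + ((2:ℕ):ℝ) by push_cast; ring, Real.rpow_add ht,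
        Real.rpow_natCast]
      norm_num
    have hcrit' : lam * C = A * t ^ 2 - B * (t ^ (p - 2) * t ^ 2) := by
      rw [← hsp, ← hmt, hcrit]
    rw [show p - 1 - 1 = p - 2 by ring, hcrit']
    have ht2 : (t:ℝ) ^ 2 ≠ 0 := pow_ne_zero 2 ht.ne'
    field_simp
    ring
  -- assemble
  refine ⟨t₁, t₂, ht₁0, ht₁₂, ?_, ?_, ?_, ?_, ?_⟩
  · rw [hderiv t₁ ht₁0, ht₁eq, sub_self, zero_div]
  · rw [hderiv t₂ ht₂0, ht₂eq, sub_self, zero_div]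
  · intro t ht hdt
    rw [hderiv t ht] at hdt
    have hcrit : mt t = lam * C := by
      have := (div_eq_zero_iff.1 hdt).resolve_right ht.ne'
      linarith [sub_eq_zero.1 this]
    rcases lt_trichotomy t tt with h | h | h
    · left
      exact hmono.injOn ⟨ht.le, h.le⟩ ⟨ht₁0.le, ht₁tt.le⟩ (by rw [hcrit, ht₁eq])
    · exfalso; rw [h] at hcrit; rw [hcrit] at hlt; exact lt_irrefl _ hlt
    · right
      exact hanti.injOn (le_of_lt h) htt₂.le (by rw [hcrit, ht₂eq])
  · rw [key2 t₁ ht₁0 ht₁eq]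
    have h1 : t₁ ^ (p - 2) < tt ^ (p - 2) := Real.rpow_lt_rpow ht₁0.le ht₁tt hp2
    rw [http] at h1
    have h2 : p * B * t₁ ^ (p - 2) < 2 * A := by
      calc p * B * t₁ ^ (p - 2) < p * B * (2 * A / (p * B)) := by
            apply mul_lt_mul_of_pos_left h1 (by positivity)
        _ = 2 * A := hPB
    linarith
  · rw [key2 t₂ ht₂0 ht₂eq]
    have h1 : tt ^ (p - 2) < t₂ ^ (p - 2) := Real.rpow_lt_rpow htt0.le htt₂ hp2
    rw [http] at h1
    have h2 : 2 * A < p * B * t₂ ^ (p - 2) := by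
      calc 2 * A = p * B * (2 * A / (p * B)) := hPB.symm
        _ < p * B * t₂ ^ (p - 2) := by
            apply mul_lt_mul_of_pos_left h1 (by positivity)
    linarith
end

section
/- Let q ∈ (0,1), m > 0 and ρ ∈ (1, 2] be real numbers. Then there exists a constant K > 0 such that for all real c ≥ m and d ≥ 0: ((c+d)^{1−q} − c^{1−q})/(1−q) − c^{−q} d ≥ −K d^{ρ}. -/
open Real

/-- Step A: from Bernoulli, `d * (c+d)^(-q) ≤ ((c+d)^(1-q) - c^(1-q))/(1-q)`. -/
lemma stmt_10_stepA (q c d : ℝ) (hq0 : 0 < q) (hq1 : q < 1) (hc : 0 < c) (hd : 0 ≤ d) :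
    d * (c + d) ^ (-q) ≤ ((c + d) ^ (1 - q) - c ^ (1 - q)) / (1 - q) := by
  have hp0 : (0:ℝ) < 1 - q := by linarith
  have hx : 0 < c + d := by linarith
  rw [le_div_iff₀ hp0]
  have hs : (-1:ℝ) ≤ -(d / (c + d)) := by
    have : d / (c + d) ≤ 1 := (div_le_one hx).mpr (by linarith)
    linarith
  have hB := rpow_one_add_le_one_add_mul_self hs (by linarith : (0:ℝ) ≤ 1 - q)
      (by linarith : (1:ℝ) - q ≤ 1)
  have h1 : (1:ℝ) + -(d / (c + d)) = c / (c + d) := by field_simp; ring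
  rw [h1, Real.div_rpow hc.le hx.le, div_le_iff₀ (Real.rpow_pos_of_pos hx _)] at hB
  have hxq : (c + d) ^ (1 - q) * (d / (c + d)) = d * (c + d) ^ (-q) := by
    have h2 : (c + d) ^ (1 - q) = (c + d) * (c + d) ^ (-q) := by
      rw [show (1:ℝ) - q = 1 + -q by ring, Real.rpow_add hx, Real.rpow_one]
    rw [h2]; field_simp
  nlinarith [hB, hxq]

/-- Step B: `c^(-q) - q * c^(-q-1) * d ≤ (c+d)^(-q)`. -/
lemma stmt_10_stepB (q c d : ℝ) (hq0 : 0 < q) (hq1 : q < 1) (hc : 0 < c) (hd : 0 ≤ d) :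
    c ^ (-q) - q * c ^ (-q - 1) * d ≤ (c + d) ^ (-q) := by
  have hx : 0 < c + d := by linarith
  have hs : (-1:ℝ) ≤ d / c := le_trans (by norm_num) (div_nonneg hd hc.le)
  have hB := rpow_one_add_le_one_add_mul_self hs hq0.le hq1.le
  have h1 : (1:ℝ) + d / c = (c + d) / c := by field_simp
  rw [h1, Real.div_rpow hx.le hc.le, div_le_iff₀ (Real.rpow_pos_of_pos hc _)] at hB
  -- hB : (c+d)^q ≤ (1 + q*(d/c)) * c^q
  have hcq : 0 < c ^ q := Real.rpow_pos_of_pos hc _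
  have hxq : 0 < (c + d) ^ q := Real.rpow_pos_of_pos hx _
  have hinv1 : (c + d) ^ (-q) = ((c + d) ^ q)⁻¹ := by
    rw [Real.rpow_neg hx.le]
  have hinv2 : c ^ (-q) = (c ^ q)⁻¹ := by rw [Real.rpow_neg hc.le]
  have hinv3 : c ^ (-q - 1) = (c ^ q)⁻¹ / c := by
    rw [show -q - 1 = -q + -1 by ring, Real.rpow_add hc, Real.rpow_neg_one, ← hinv2]
    rw [hinv2]; ring
  rw [hinv1, hinv2, hinv3]
  set L : ℝ := (c ^ q)⁻¹ - q * ((c ^ q)⁻¹ / c) * d with hL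
  clear_value L
  rcases le_or_gt L 0 with h | h
  · exact h.trans (inv_pos.mpr hxq).le
  · have h1 : L * (c + d) ^ q ≤ L * ((1 + q * (d / c)) * c ^ q) :=
      mul_le_mul_of_nonneg_left hB h.le
    have h2 : L * ((1 + q * (d / c)) * c ^ q) = 1 - (q * d / c) ^ 2 := by
      rw [hL]; field_simp; ring
    have hmul : L * (c + d) ^ q ≤ 1 := by linarith [sq_nonneg (q * d / c), h1, h2]
    calc L = L * (c + d) ^ q * ((c + d) ^ q)⁻¹ := by field_simp
      _ ≤ 1 * ((c + d) ^ q)⁻¹ :=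
        mul_le_mul_of_nonneg_right hmul (inv_nonneg.mpr hxq.le)
      _ = ((c + d) ^ q)⁻¹ := one_mul _

/-- For `0 < q < 1`, `m > 0` and `1 < ρ ≤ 2` there is a constant `K > 0` such
that for all `c ≥ m` and `d ≥ 0`:
`((c+d)^(1-q) - c^(1-q))/(1-q) - c^(-q) d ≥ -K d^ρ`. -/
theorem stmt_10 (q m ρ : ℝ) (hq0 : 0 < q) (hq1 : q < 1) (hm : 0 < m)
    (hρ1 : 1 < ρ) (hρ2 : ρ ≤ 2) :
    ∃ K : ℝ, 0 < K ∧ ∀ c d : ℝ, m ≤ c → 0 ≤ d →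
      ((c + d) ^ (1 - q) - c ^ (1 - q)) / (1 - q) - c ^ (-q) * d ≥ -K * d ^ ρ := by
  have hmq : 0 < m ^ (-q) := Real.rpow_pos_of_pos hm _
  have hmq1 : 0 < m ^ (-q - 1) := Real.rpow_pos_of_pos hm _
  refine ⟨q * m ^ (-q - 1) + m ^ (-q), by positivity, ?_⟩
  intro c d hcm hd
  have hc : 0 < c := lt_of_lt_of_le hm hcm
  have hx : 0 < c + d := by linarith
  have hcq : c ^ (-q) ≤ m ^ (-q) :=
    Real.rpow_le_rpow_of_nonpos hm hcm (by linarith)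
  have hcq1 : c ^ (-q - 1) ≤ m ^ (-q - 1) :=
    Real.rpow_le_rpow_of_nonpos hm hcm (by linarith)
  have hcqpos : 0 < c ^ (-q) := Real.rpow_pos_of_pos hc _
  have hcq1pos : 0 < c ^ (-q - 1) := Real.rpow_pos_of_pos hc _
  have hA := stmt_10_stepA q c d hq0 hq1 hc hd
  have hB := stmt_10_stepB q c d hq0 hq1 hc hd
  have hρnonneg : 0 ≤ d ^ ρ := Real.rpow_nonneg hd ρ
  rcases le_or_gt d 1 with hd1 | hd1
  · -- use quadratic bound
    have hsq : d ^ (2:ℝ) ≤ d ^ ρ := by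
      rcases eq_or_lt_of_le hd with h | h
      · rw [← h, Real.zero_rpow (by norm_num : (2:ℝ) ≠ 0),
          Real.zero_rpow (by linarith : ρ ≠ 0)]
      · exact Real.rpow_le_rpow_of_exponent_ge h hd1 hρ2
    rw [Real.rpow_two] at hsq
    have key : ((c + d) ^ (1 - q) - c ^ (1 - q)) / (1 - q) - c ^ (-q) * d
        ≥ -(q * c ^ (-q - 1)) * d ^ 2 := by
      have h1 : d * (c ^ (-q) - q * c ^ (-q - 1) * d) ≤ d * (c + d) ^ (-q) :=
        mul_le_mul_of_nonneg_left hB hd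
      nlinarith [hA]
    have h2 : q * c ^ (-q - 1) * d ^ 2 ≤ q * m ^ (-q - 1) * d ^ ρ := by
      have := mul_le_mul hcq1 hsq (by positivity) hmq1.le
      nlinarith
    nlinarith [mul_nonneg hmq.le hρnonneg]
  · -- use linear bound
    have hdρ : d ≤ d ^ ρ := by
      calc d = d ^ (1:ℝ) := (Real.rpow_one d).symm
        _ ≤ d ^ ρ := Real.rpow_le_rpow_of_exponent_le hd1.le hρ1.le
    have key : ((c + d) ^ (1 - q) - c ^ (1 - q)) / (1 - q) - c ^ (-q) * d
        ≥ -(c ^ (-q)) * d := by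
      have h0 : 0 ≤ d * (c + d) ^ (-q) :=
        mul_nonneg hd (Real.rpow_pos_of_pos hx _).le
      nlinarith [hA]
    have h2 : c ^ (-q) * d ≤ m ^ (-q) * d ^ ρ := by
      calc c ^ (-q) * d ≤ m ^ (-q) * d := by nlinarith
        _ ≤ m ^ (-q) * d ^ ρ := by nlinarith
    nlinarith [mul_nonneg (mul_nonneg hq0.le hmq1.le) hρnonneg]
end

section
/- Let p > 2 and M > 0 be real numbers. Then there exists a constant K > 0 such that for all real c with 0 ≤ c ≤ M and all real d ≥ 1: (c+d)^{p}/p − c^{p}/p − c^{p−1} d ≥ d^{p}/p + K c d^{p−1}. -/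
open Real

/-- Tangent-line inequality for rpow: `(x+y)^q ≥ x^q + q x^(q-1) y`. -/
lemma tangent_rpow (x y q : ℝ) (hx : 0 < x) (hy : 0 ≤ y) (hq : 1 ≤ q) :
    x ^ q + q * x ^ (q - 1) * y ≤ (x + y) ^ q := by
  have hyx : (0:ℝ) ≤ y / x := by positivity
  have hb := one_add_mul_self_le_rpow_one_add (by linarith : (-1:ℝ) ≤ y / x) hq
  have hxy : x + y = x * (1 + y / x) := by field_simp
  rw [hxy, Real.mul_rpow hx.le (by linarith : (0:ℝ) ≤ 1 + y / x)]
  have h2 : x ^ q * (1 + q * (y / x)) ≤ x ^ q * (1 + y / x) ^ q :=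
    mul_le_mul_of_nonneg_left hb (Real.rpow_nonneg hx.le q)
  have h3 : x ^ (q - 1) = x ^ q / x := Real.rpow_sub_one hx.ne' q
  calc x ^ q + q * x ^ (q - 1) * y = x ^ q * (1 + q * (y / x)) := by
        rw [h3]; field_simp
    _ ≤ x ^ q * (1 + y / x) ^ q := h2

/-- Key quantitative superadditivity: for `0 < c ≤ M`, `1 ≤ d`, `1 < q`,
`(c+d)^q ≥ c^q + d^q + ((q-1)/(1+M)) c d^(q-1)`. -/
lemma key_rpow (c d M q : ℝ) (hc : 0 < c) (hcM : c ≤ M) (hd : 1 ≤ d) (hq : 1 < q) :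
    c ^ q + d ^ q + ((q - 1) / (1 + M)) * c * d ^ (q - 1) ≤ (c + d) ^ q := by
  have hM : 0 < M := lt_of_lt_of_le hc hcM
  have hd0 : 0 < d := lt_of_lt_of_le one_pos hd
  have hδ : (q - 1) / (1 + M) ≤ q - 1 := by
    rw [div_le_iff₀ (by linarith : (0:ℝ) < 1 + M)]
    nlinarith
  have hδ0 : 0 ≤ (q - 1) / (1 + M) :=
    div_nonneg (by linarith) (by linarith)
  rcases le_total c d with hcd | hcd
  · -- c ≤ d : use tangent at d
    have h1 := tangent_rpow d c q hd0 hc.le hq.le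
    rw [add_comm d c] at h1
    have h2 : c ^ q ≤ c * d ^ (q - 1) := by
      have hcc : c ^ q = c * c ^ (q - 1) := by
        rw [Real.rpow_sub_one hc.ne' q]; field_simp
      rw [hcc]
      exact mul_le_mul_of_nonneg_left
        (Real.rpow_le_rpow hc.le hcd (by linarith)) hc.le
    have h3 : ((q - 1) / (1 + M)) * c * d ^ (q - 1) ≤ (q - 1) * (c * d ^ (q - 1)) := by
      have hcd' : 0 ≤ c * d ^ (q - 1) := by positivity
      nlinarith
    have h4 : q * d ^ (q - 1) * c = q * (c * d ^ (q - 1)) := by ring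
    nlinarith [h1, h2, h3, h4]
  · -- d ≤ c : use tangent at c
    have h1 := tangent_rpow c d q hc hd0.le hq.le
    have hce : d ^ (q - 1) ≤ c ^ (q - 1) :=
      Real.rpow_le_rpow hd0.le hcd (by linarith)
    have hdq : d ^ (q - 1) * d = d ^ q := by
      rw [Real.rpow_sub_one hd0.ne' q]; field_simp
    have h2 : q * d ^ q ≤ q * c ^ (q - 1) * d := by
      calc q * d ^ q = q * (d ^ (q - 1) * d) := by rw [hdq]
        _ ≤ q * (c ^ (q - 1) * d) := by
            apply mul_le_mul_of_nonneg_left _ (by linarith : (0:ℝ) ≤ q)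
            exact mul_le_mul_of_nonneg_right hce hd0.le
        _ = q * c ^ (q - 1) * d := by ring
    have h3 : d ^ (q - 1) ≤ d ^ q :=
      Real.rpow_le_rpow_of_exponent_le hd (by linarith)
    have h4 : ((q - 1) / (1 + M)) * c * d ^ (q - 1) ≤ (q - 1) * d ^ q := by
      have hdq1 : 0 ≤ d ^ (q - 1) := by positivity
      have hh : ((q - 1) / (1 + M)) * c ≤ q - 1 := by
        rw [div_mul_eq_mul_div, div_le_iff₀ (by linarith : (0:ℝ) < 1 + M)]
        nlinarith
      nlinarith [Real.rpow_nonneg hd0.le q]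
    nlinarith [h1, h2, h4]

/-- For `p > 2` and `M > 0` there is a constant `K > 0` such that for all
`0 ≤ c ≤ M` and `d ≥ 1`:
`(c+d)^p/p - c^p/p - c^(p-1) d ≥ d^p/p + K c d^(p-1)`. -/
theorem stmt_12 (p M : ℝ) (hp : 2 < p) (hM : 0 < M) :
    ∃ K : ℝ, 0 < K ∧ ∀ c d : ℝ, 0 ≤ c → c ≤ M → 1 ≤ d →
      (c + d) ^ p / p - c ^ p / p - c ^ (p - 1) * d ≥ d ^ p / p + K * c * d ^ (p - 1) := by
  have hp0 : (0:ℝ) < p := by linarith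
  refine ⟨(p - 2) / (p * (1 + M)), div_pos (by linarith) (by nlinarith), ?_⟩
  intro c d hc0 hcM hd
  have hd0 : (0:ℝ) < d := lt_of_lt_of_le one_pos hd
  rcases eq_or_lt_of_le hc0 with rfl | hc
  · -- c = 0
    have hpne : p ≠ 0 := hp0.ne'
    have hpne1 : p - 1 ≠ 0 := by intro h; linarith
    rw [Real.zero_rpow hpne, Real.zero_rpow hpne1]
    simp
  · -- c > 0
    have hcd : 0 < c + d := by linarith
    have e1 : p - 1 - 1 = p - 2 := by ring
    have h1 := tangent_rpow c d (p - 1) hc hd0.le (by linarith)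
    rw [e1] at h1
    have h2 := key_rpow c d M (p - 1) hc hcM hd (by linarith)
    rw [e1] at h2
    -- basic power identities
    have pc : c ^ (p - 1) * c = c ^ p := by
      rw [Real.rpow_sub_one hc.ne' p]; field_simp
    have pc2 : c ^ (p - 2) * c = c ^ (p - 1) := by
      have := Real.rpow_sub_one hc.ne' (p - 1)
      rw [e1] at this; rw [this]; field_simp
    have pd : d ^ (p - 1) * d = d ^ p := by
      rw [Real.rpow_sub_one hd0.ne' p]; field_simp
    have pd2 : d ^ (p - 2) * d = d ^ (p - 1) := by
      have := Real.rpow_sub_one hd0.ne' (p - 1)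
      rw [e1] at this; rw [this]; field_simp
    have hmul : (c + d) ^ p = (c + d) ^ (p - 1) * c + (c + d) ^ (p - 1) * d := by
      have : (c + d) ^ (p - 1) * (c + d) = (c + d) ^ p := by
        rw [Real.rpow_sub_one hcd.ne' p]; field_simp
      rw [← this]; ring
    have hA : (c ^ (p - 1) + (p - 1) * c ^ (p - 2) * d) * c ≤ (c + d) ^ (p - 1) * c :=
      mul_le_mul_of_nonneg_right h1 hc.le
    have hB : (c ^ (p - 1) + d ^ (p - 1) + ((p - 2) / (1 + M)) * c * d ^ (p - 2)) * d
        ≤ (c + d) ^ (p - 1) * d := mul_le_mul_of_nonneg_right h2 hd0.le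
    have exp1 : (c ^ (p - 1) + (p - 1) * c ^ (p - 2) * d) * c
        = c ^ p + (p - 1) * (c ^ (p - 1) * d) := by
      rw [← pc, ← pc2]; ring
    have exp2 : (c ^ (p - 1) + d ^ (p - 1) + ((p - 2) / (1 + M)) * c * d ^ (p - 2)) * d
        = c ^ (p - 1) * d + d ^ p + ((p - 2) / (1 + M)) * (c * d ^ (p - 1)) := by
      rw [← pd, ← pd2]; ring
    rw [exp1] at hA; rw [exp2] at hB
    have key : c ^ p + d ^ p + p * (c ^ (p - 1) * d)
        + ((p - 2) / (1 + M)) * (c * d ^ (p - 1)) ≤ (c + d) ^ p := by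
      rw [hmul]; linarith
    have expand : (c + d) ^ p / p - c ^ p / p - c ^ (p - 1) * d
        - (d ^ p / p + (p - 2) / (p * (1 + M)) * c * d ^ (p - 1))
        = ((c + d) ^ p - (c ^ p + d ^ p + p * (c ^ (p - 1) * d)
            + ((p - 2) / (1 + M)) * (c * d ^ (p - 1)))) / p := by
      field_simp; ring
    rw [ge_iff_le, ← sub_nonneg, expand]
    apply div_nonneg _ hp0.le
    linarith
end
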